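/- Let a = (1 + √−15)/2 ∈ ℂ. Then 3·D((a+3)/4) + 2·D(a−1) + 2·D(a+1) + 4·D(a/2) = 3·D(a) + 4·D((a+1)/2) + 2·D(a+1) + 2·D(a−1), where D is the Bloch–Wigner dilogarithm; that is, the element ξ = 3[(a+3)/4] + 2[a−1] + 2[a+1] + 4[a/2] and Gangl's element δ = 3[a] + 4[(a+1)/2] + 2[a+1] + 2[a−1] have the same value under D. -/

import Mathlib

open scoped Real

/-- The dilogarithm `Li₂`, the analytic continuation of `∑_{n ≥ 1} zⁿ / n²`
(which is given for `|z| ≤ 1`), via the classical integral formula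
`Li₂(z) = -∫₀¹ log(1 - z t) / t dt` (principal branch). -/
noncomputable def Li2 (z : ℂ) : ℂ :=
  -∫ t in (0:ℝ)..1, Complex.log (1 - z * t) / t

/-- The Bloch–Wigner dilogarithm `D(z) = Im(Li₂(z)) + arg(1 - z) · log |z|`. -/
noncomputable def blochWigner (z : ℂ) : ℝ :=
  (Li2 z).im + (1 - z).arg * Real.log ‖z‖

open Complex MeasureTheory Metric Set Filter Topology intervalIntegral

/-- `z` is good if `1 - z t` stays in the slit plane for `t ∈ [0,1]`. -/
def Li2Good (z : ℂ) : Prop := ∀ t : ℝ, t ∈ Set.Icc (0:ℝ) 1 → (1 - z * t) ∈ Complex.slitPlane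

lemma li2Good_of_im_ne {z : ℂ} (hz : z.im ≠ 0) : Li2Good z := by
  intro t ht
  rcases eq_or_lt_of_le ht.1 with h0 | h0
  · refine Or.inl ?_
    simp [← h0]
  · refine Or.inr ?_
    simp only [sub_im, one_im, mul_im, ofReal_re, ofReal_im, mul_zero, add_zero, zero_sub,
      ne_eq, neg_eq_zero, zero_add]
    exact mul_ne_zero hz (ne_of_gt h0)

lemma li2Good_of_real_lt_one {x : ℝ} (h : x < 1) : Li2Good (x : ℂ) := by
  intro t ht
  refine Or.inl ?_
  have : ((x : ℂ) * (t : ℂ)) = ((x * t : ℝ) : ℂ) := by push_cast; ring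
  rw [this]
  simp only [sub_re, one_re, ofReal_re]
  have h1 : x * t < 1 := by
    rcases eq_or_lt_of_le ht.2 with h2 | h2
    · rw [h2]; simpa using h
    · nlinarith [mul_nonneg ht.1 (sub_nonneg.2 h.le)]
  linarith

/-- derivative in the real variable `t` -/
lemma hasDerivAt_log_one_sub_mul_real {z : ℂ} {t : ℝ} (h : (1 - z * t) ∈ slitPlane) :
    HasDerivAt (fun s : ℝ => Complex.log (1 - z * s)) (-z * (1 - z * t)⁻¹) t := by
  have hinner : HasDerivAt (fun s : ℝ => 1 - z * (s : ℂ)) (-z) t := by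
    have h1 : HasDerivAt (fun s : ℝ => (s : ℂ)) 1 t := by
      exact Complex.ofRealCLM.hasDerivAt (x := t)
    simpa using (h1.const_mul z).const_sub 1
  have hlog := (Complex.hasDerivAt_log h).hasFDerivAt.restrictScalars ℝ
  have := hlog.comp_hasDerivAt t hinner
  simpa [mul_comm, Function.comp_def] using this

/-- derivative in the complex parameter `x` -/
lemma hasDerivAt_log_one_sub_mul_param {t : ℝ} {x : ℂ} (h : (1 - x * t) ∈ slitPlane) :
    HasDerivAt (fun x : ℂ => Complex.log (1 - x * t)) (-(t : ℂ) * (1 - x * t)⁻¹) x := by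
  have hinner : HasDerivAt (fun x : ℂ => 1 - x * (t : ℂ)) (-(t : ℂ)) x := by
    simpa using ((hasDerivAt_id x).mul_const (t : ℂ)).const_sub 1
  have := (Complex.hasDerivAt_log h).comp x hinner
  simpa [Function.comp_def, mul_comm] using this

lemma integral_neg_inv_one_sub_mul {z : ℂ} (hg : Li2Good z) (h0 : z ≠ 0) :
    (∫ t in (0:ℝ)..1, -(1 - z * t)⁻¹) = Complex.log (1 - z) / z := by
  have huIcc : Set.uIcc (0:ℝ) 1 = Set.Icc 0 1 := Set.uIcc_of_le zero_le_one
  have hderiv : ∀ t ∈ Set.uIcc (0:ℝ) 1,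
      HasDerivAt (fun s : ℝ => Complex.log (1 - z * s) / z) (-(1 - z * t)⁻¹) t := by
    intro t ht
    rw [huIcc] at ht
    have hne : (1 - z * (t:ℂ)) ≠ 0 := slitPlane_ne_zero (hg t ht)
    have := (hasDerivAt_log_one_sub_mul_real (hg t ht)).div_const z
    refine this.congr_deriv ?_
    field_simp
  have hcont : ContinuousOn (fun t : ℝ => -(1 - z * t)⁻¹) (Set.uIcc (0:ℝ) 1) := by
    rw [huIcc]
    refine (ContinuousOn.inv₀ ?_ ?_).neg
    · exact (continuous_const.sub (continuous_const.mul Complex.continuous_ofReal)).continuousOn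
    · intro t ht
      exact slitPlane_ne_zero (hg t ht)
  have := intervalIntegral.integral_eq_sub_of_hasDerivAt hderiv
    (hcont.intervalIntegrable)
  rw [this]
  simp

lemma Li2_hasDerivAt {z₀ : ℂ} (hg : Li2Good z₀) (h0 : z₀ ≠ 0) :
    HasDerivAt Li2 (-(Complex.log (1 - z₀) / z₀)) z₀ := by
  -- minimum modulus on the segment
  have hcontf : Continuous fun t : ℝ => ‖1 - z₀ * t‖ :=
    continuous_norm.comp (continuous_const.sub (continuous_const.mul
      Complex.continuous_ofReal))
  obtain ⟨t₀, ht₀, hmin⟩ := isCompact_Icc.exists_isMinOn (α := ℝ)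
    (Set.nonempty_Icc.mpr zero_le_one) hcontf.continuousOn
  set m : ℝ := ‖1 - z₀ * t₀‖ with hm_def
  have hm_pos : 0 < m := by
    have := slitPlane_ne_zero (hg t₀ ht₀)
    exact norm_pos_iff.mpr this
  -- thickening radius
  have hKcpt : IsCompact ((fun t : ℝ => 1 - z₀ * t) '' Set.Icc 0 1) :=
    isCompact_Icc.image (continuous_const.sub (continuous_const.mul Complex.continuous_ofReal))
  obtain ⟨δ, hδpos, hδ⟩ := hKcpt.exists_thickening_subset_open isOpen_slitPlane
    (by rintro _ ⟨t, ht, rfl⟩; exact hg t ht)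
  set ε : ℝ := min δ (m / 2) with hε_def
  have hεpos : 0 < ε := lt_min hδpos (by linarith)
  have key : ∀ x ∈ ball z₀ ε, ∀ t : ℝ, t ∈ Set.Icc (0:ℝ) 1 →
      (1 - x * t) ∈ slitPlane ∧ m / 2 ≤ ‖1 - x * t‖ := by
    intro x hx t ht
    have hdist : dist (1 - x * (t:ℂ)) (1 - z₀ * t) < ε := by
      rw [Complex.dist_eq]
      have he : (1 - x * (t:ℂ)) - (1 - z₀ * t) = (z₀ - x) * t := by ring
      rw [he]
      calc ‖(z₀ - x) * t‖ = ‖z₀ - x‖ * |t| := by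
            rw [norm_mul, Complex.norm_real, Real.norm_eq_abs]
        _ ≤ ‖z₀ - x‖ * 1 := by
            gcongr
            rw [abs_le]; constructor <;> linarith [ht.1, ht.2]
        _ < ε := by
            rw [mul_one]
            have := mem_ball.mp hx
            rwa [dist_comm, Complex.dist_eq] at this
    constructor
    · apply hδ
      rw [Metric.mem_thickening_iff]
      exact ⟨1 - z₀ * t, ⟨t, ht, rfl⟩, lt_of_lt_of_le hdist (min_le_left _ _)⟩
    · have h1 : m ≤ ‖1 - z₀ * t‖ := hmin ht
      have h2 : ‖1 - z₀ * t‖ - ‖1 - x * t‖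
          ≤ ‖(1 - z₀ * t) - (1 - x * t)‖ := by
        simpa using norm_sub_norm_le (1 - z₀ * (t:ℂ)) (1 - x * t)
      rw [Complex.dist_eq] at hdist
      have h3 : ‖(1 - z₀ * (t:ℂ)) - (1 - x * t)‖ < ε := by
        rwa [show (1 - z₀ * (t:ℂ)) - (1 - x * t) = -((1 - x * (t:ℂ)) - (1 - z₀ * t)) by ring,
          norm_neg]
      have hεm : ε ≤ m / 2 := min_le_right _ _
      linarith
  -- apply differentiation under the integral sign
  have main := intervalIntegral.hasDerivAt_integral_of_dominated_loc_of_deriv_le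
    (F := fun x : ℂ => fun t : ℝ => Complex.log (1 - x * t) / t)
    (F' := fun x : ℂ => fun t : ℝ => -(1 - x * t)⁻¹)
    (x₀ := z₀) (bound := fun _ => 2 / m) (a := 0) (b := 1) (μ := volume)
    (ball_mem_nhds z₀ hεpos)
    (Filter.Eventually.of_forall fun x =>
      (((Complex.measurable_log.comp
        (measurable_const.sub (Complex.measurable_ofReal.const_mul x))).div
        Complex.measurable_ofReal).aestronglyMeasurable))
    ?hint
    (((measurable_const.sub (Complex.measurable_ofReal.const_mul z₀)).inv).neg).aestronglyMeasurable
    ?hbound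
    intervalIntegrable_const
    ?hdiff
  case hbound =>
    refine Filter.Eventually.of_forall fun t ht x hx => ?_
    have ht' : t ∈ Set.Icc (0:ℝ) 1 := by
      rw [Set.uIoc_of_le zero_le_one] at ht
      exact ⟨le_of_lt ht.1, ht.2⟩
    have hk := (key x hx t ht').2
    rw [norm_neg, norm_inv]
    have h5 : (‖1 - x * ↑t‖)⁻¹ ≤ (m/2)⁻¹ := inv_anti₀ (by positivity) hk
    simpa [inv_div] using h5
  case hdiff =>
    refine Filter.Eventually.of_forall fun t ht x hx => ?_
    rw [Set.uIoc_of_le zero_le_one] at ht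
    have ht' : t ∈ Set.Icc (0:ℝ) 1 := ⟨le_of_lt ht.1, ht.2⟩
    have htne : (t:ℂ) ≠ 0 := by exact_mod_cast ne_of_gt ht.1
    have hslit := (key x hx t ht').1
    have hne : (1 - x * (t:ℂ)) ≠ 0 := slitPlane_ne_zero hslit
    have hder := (hasDerivAt_log_one_sub_mul_param hslit).div_const (t:ℂ)
    refine hder.congr_deriv ?_
    field_simp
  case hint =>
    classical
    set g : ℝ → ℂ := fun t => if t = 0 then -z₀ else Complex.log (1 - z₀ * t) / t with hgdef
    have hgcont : ContinuousOn g (Set.Icc (0:ℝ) 1) := by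
      intro t ht
      by_cases h : t = 0
      · subst h
        have hd : HasDerivAt (fun s : ℝ => Complex.log (1 - z₀ * s)) (-z₀) 0 := by
          have h0mem : ((0:ℝ)) ∈ Set.Icc (0:ℝ) 1 := by simp
          have := hasDerivAt_log_one_sub_mul_real (z := z₀) (t := 0) (hg 0 h0mem)
          simpa using this
        have hslope := hasDerivAt_iff_tendsto_slope.mp hd
        have hEq : ∀ᶠ s in 𝓝[≠] (0:ℝ),
            slope (fun s : ℝ => Complex.log (1 - z₀ * s)) 0 s = g s := by
          refine eventually_mem_nhdsWithin.mono fun s hs => ?_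
          have hs' : s ≠ 0 := hs
          simp only [slope, hgdef, if_neg hs', vsub_eq_sub, sub_zero, Complex.ofReal_zero,
            mul_zero, Complex.log_one]
          rw [Complex.real_smul, Complex.ofReal_inv]
          ring
        have hg1 : Tendsto g (𝓝[≠] (0:ℝ)) (𝓝 (-z₀)) := hslope.congr' hEq
        have hg2 : Tendsto g (𝓝 (0:ℝ)) (𝓝 (-z₀)) := by
          rw [← nhdsNE_sup_pure (0:ℝ)]
          refine Tendsto.sup hg1 ?_
          have : g 0 = -z₀ := by simp [hgdef]
          rw [← this]
          exact tendsto_pure_nhds g 0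
        have : ContinuousAt g 0 := by
          have hg0 : g 0 = -z₀ := by simp [hgdef]
          unfold ContinuousAt
          rw [hg0]
          exact hg2
        exact this.continuousWithinAt
      · have hca : ContinuousAt (fun s : ℝ => Complex.log (1 - z₀ * s) / s) t := by
          have hc1 : ContinuousAt (fun s : ℝ => Complex.log (1 - z₀ * s)) t := by
            refine ContinuousAt.clog ?_ (hg t ht)
            exact (continuous_const.sub
              (continuous_const.mul Complex.continuous_ofReal)).continuousAt
          refine hc1.div Complex.continuous_ofReal.continuousAt ?_
          exact_mod_cast h
        have heq : (fun s : ℝ => Complex.log (1 - z₀ * s) / s) =ᶠ[𝓝 t] g := by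
          refine Filter.eventually_of_mem (isOpen_ne.mem_nhds h) fun s hs => ?_
          simp [hgdef, if_neg hs]
        exact (hca.congr heq).continuousWithinAt
    have hgint : IntervalIntegrable g volume 0 1 := by
      apply ContinuousOn.intervalIntegrable
      rwa [Set.uIcc_of_le zero_le_one]
    rw [intervalIntegrable_iff] at hgint ⊢
    refine hgint.congr ?_
    refine (ae_restrict_iff' measurableSet_uIoc).2 (ae_of_all _ fun s hs => ?_)
    rw [Set.uIoc_of_le zero_le_one] at hs
    simp [hgdef, if_neg (ne_of_gt hs.1)]
  -- conclude
  have h1 := main.2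
  have h2 := integral_neg_inv_one_sub_mul hg h0
  have h3 : HasDerivAt (fun x : ℂ => -∫ t in (0:ℝ)..1, Complex.log (1 - x * t) / t)
      (-(Complex.log (1 - z₀) / z₀)) z₀ := by
    have := h1.neg
    rwa [h2] at this
  exact h3

lemma Li2_continuousAt {z : ℂ} (hg : Li2Good z) (h0 : z ≠ 0) : ContinuousAt Li2 z :=
  (Li2_hasDerivAt hg h0).continuousAt

lemma Li2_conj {z : ℂ} (hg : Li2Good z) :
    Li2 ((starRingEnd ℂ) z) = (starRingEnd ℂ) (Li2 z) := by
  unfold Li2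
  have h1 : (∫ t in (0:ℝ)..1, Complex.log (1 - (starRingEnd ℂ) z * t) / t)
      = ∫ t in (0:ℝ)..1, (starRingEnd ℂ) (Complex.log (1 - z * t) / t) := by
    refine intervalIntegral.integral_congr fun t ht => ?_
    rw [Set.uIcc_of_le zero_le_one] at ht
    have hc : (1 : ℂ) - (starRingEnd ℂ) z * t = (starRingEnd ℂ) (1 - z * t) := by
      rw [map_sub, map_one, map_mul, Complex.conj_ofReal]
    rw [hc, Complex.log_conj _ (Complex.slitPlane_arg_ne_pi (hg t ht)), map_div₀,
      Complex.conj_ofReal]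
  have h2 : (∫ t in (0:ℝ)..1, (starRingEnd ℂ) (Complex.log (1 - z * t) / t))
      = (starRingEnd ℂ) (∫ t in (0:ℝ)..1, Complex.log (1 - z * t) / t) := by
    simp only [intervalIntegral]
    rw [map_sub, ← integral_conj, ← integral_conj]
  rw [h1, h2, map_neg]

/-- Euler's reflection auxiliary function. -/
noncomputable def Gfun (z : ℂ) : ℂ :=
  Li2 z + Li2 (1 - z) + Complex.log z * Complex.log (1 - z)

lemma G_hasDerivAt {z : ℂ} (hz : 0 < z.im) : HasDerivAt Gfun 0 z := by
  have hzim : z.im ≠ 0 := ne_of_gt hz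
  have h1zim : ((1:ℂ) - z).im ≠ 0 := by simpa using hzim
  have hz0 : z ≠ 0 := fun h => by simp [h] at hz
  have h1z0 : (1:ℂ) - z ≠ 0 := fun h => h1zim (by rw [h]; simp)
  have hsz : z ∈ slitPlane := Or.inr hzim
  have hs1z : ((1:ℂ) - z) ∈ slitPlane := Or.inr h1zim
  have d1 := Li2_hasDerivAt (li2Good_of_im_ne hzim) hz0
  have d2 : HasDerivAt (fun w : ℂ => Li2 (1 - w))
      (-(Complex.log (1 - (1 - z)) / (1 - z)) * (-1)) z := by
    have inner : HasDerivAt (fun w : ℂ => 1 - w) (-1) z := by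
      simpa using (hasDerivAt_id z).const_sub 1
    have := (Li2_hasDerivAt (li2Good_of_im_ne h1zim) h1z0).comp z inner
    simpa [Function.comp_def] using this
  have d3log : HasDerivAt (fun w : ℂ => Complex.log (1 - w)) ((1 - z)⁻¹ * (-1)) z := by
    have inner : HasDerivAt (fun w : ℂ => 1 - w) (-1) z := by
      simpa using (hasDerivAt_id z).const_sub 1
    have := (Complex.hasDerivAt_log hs1z).comp z inner
    simpa [Function.comp_def] using this
  have d3 := (Complex.hasDerivAt_log hsz).mul d3log
  have dG := (d1.add d2).add d3
  have : (1:ℂ) - (1 - z) = z := by ring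
  rw [this] at d2 dG
  refine dG.congr_deriv ?_
  field_simp
  ring

lemma isOpen_UHP : IsOpen {c : ℂ | 0 < c.im} := isOpen_lt continuous_const Complex.continuous_im

lemma const_on_UHP {f : ℂ → ℂ} (hf : ∀ z : ℂ, 0 < z.im → HasDerivAt f 0 z)
    {z w : ℂ} (hz : 0 < z.im) (hw : 0 < w.im) : f z = f w := by
  have hconv : Convex ℝ {c : ℂ | 0 < c.im} := convex_halfSpace_im_gt 0
  refine hconv.is_const_of_fderivWithin_eq_zero (𝕜 := ℂ) ?_ ?_ hz hw
  · exact fun x hx => ((hf x hx).differentiableAt).differentiableWithinAt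
  · intro x hx
    rw [fderivWithin_of_isOpen isOpen_UHP hx]
    have := (hf x hx).hasFDerivAt.fderiv
    rw [this]
    ext
    simp

lemma G_conj {z : ℂ} (hz : 0 < z.im) :
    Gfun ((starRingEnd ℂ) z) = (starRingEnd ℂ) (Gfun z) := by
  have hzim : z.im ≠ 0 := ne_of_gt hz
  have h1zim : ((1:ℂ) - z).im ≠ 0 := by simpa using hzim
  unfold Gfun
  have hc : (1:ℂ) - (starRingEnd ℂ) z = (starRingEnd ℂ) (1 - z) := by
    rw [map_sub, map_one]
  rw [hc, Li2_conj (li2Good_of_im_ne hzim), Li2_conj (li2Good_of_im_ne h1zim),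
    Complex.log_conj _ ?h1, Complex.log_conj _ ?h2, map_add, map_add, map_mul]
  case h1 => exact fun h => hzim (Complex.arg_eq_pi_iff.mp h).2
  case h2 => exact fun h => h1zim (Complex.arg_eq_pi_iff.mp h).2

lemma G_continuousAt_half : ContinuousAt Gfun (1/2 : ℂ) := by
  have hgood : Li2Good ((1:ℂ)/2) := by
    have h := li2Good_of_real_lt_one (x := 1/2) (by norm_num)
    rwa [show (((1:ℝ)/2 : ℝ) : ℂ) = (1:ℂ)/2 by push_cast; ring] at h
  have hne : ((1:ℂ)/2) ≠ 0 := by norm_num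
  have hslit : ((1:ℂ)/2) ∈ slitPlane := by
    refine Or.inl ?_
    norm_num
  have hhalf : (1:ℂ) - 1/2 = 1/2 := by norm_num
  have hc : ContinuousAt (fun z : ℂ => (1:ℂ) - z) (1/2 : ℂ) :=
    (continuous_const.sub continuous_id).continuousAt
  have c1 : ContinuousAt Li2 (1/2 : ℂ) := Li2_continuousAt hgood hne
  have c1' : ContinuousAt Li2 ((1:ℂ) - 1/2) := by rw [hhalf]; exact c1
  have c2 : ContinuousAt (fun z : ℂ => Li2 (1 - z)) (1/2 : ℂ) := by
    have := c1'.comp hc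
    simpa [Function.comp_def] using this
  have c3 : ContinuousAt (fun z : ℂ => Complex.log z) (1/2 : ℂ) :=
    continuousAt_clog hslit
  have hslit' : ((1:ℂ) - 1/2) ∈ slitPlane := by rw [hhalf]; exact hslit
  have c4 : ContinuousAt (fun z : ℂ => Complex.log (1 - z)) (1/2 : ℂ) := by
    have := (continuousAt_clog hslit').comp hc
    simpa [Function.comp_def] using this
  exact (c1.add c2).add (c3.mul c4)

lemma im_eq_zero_of_pin {f : ℂ → ℂ} (hderiv : ∀ z : ℂ, 0 < z.im → HasDerivAt f 0 z)
    (hconj : ∀ z : ℂ, 0 < z.im → f ((starRingEnd ℂ) z) = (starRingEnd ℂ) (f z))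
    {p : ℂ} (hp : p.im = 0) (hcont : ContinuousAt f p)
    {z : ℂ} (hz : 0 < z.im) : (f z).im = 0 := by
  have hpath : Tendsto (fun s : ℝ => p + s * Complex.I) (𝓝[>] (0:ℝ)) (𝓝 p) := by
    have hcont2 : Continuous (fun s : ℝ => p + s * Complex.I) :=
      continuous_const.add (Complex.continuous_ofReal.mul continuous_const)
    have := hcont2.tendsto 0
    simp only [Complex.ofReal_zero, zero_mul, add_zero] at this
    exact this.mono_left nhdsWithin_le_nhds
  have him : ∀ s : ℝ, 0 < s → 0 < (p + s * Complex.I).im := by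
    intro s hs
    simp [hp, hs]
  -- from above
  have hup : Tendsto (fun s : ℝ => f (p + s * Complex.I)) (𝓝[>] (0:ℝ)) (𝓝 (f p)) :=
    hcont.tendsto.comp hpath
  have hupc : ∀ᶠ (s : ℝ) in 𝓝[>] (0:ℝ), f (p + s * Complex.I) = f z := by
    filter_upwards [self_mem_nhdsWithin] with s hs
    exact const_on_UHP hderiv (him s hs) hz
  have h1 : f p = f z := tendsto_nhds_unique (hup.congr' hupc) tendsto_const_nhds
  -- from below
  have hpath2 : Tendsto (fun s : ℝ => p - s * Complex.I) (𝓝[>] (0:ℝ)) (𝓝 p) := by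
    have hcont2 : Continuous (fun s : ℝ => p - s * Complex.I) :=
      continuous_const.sub (Complex.continuous_ofReal.mul continuous_const)
    have := hcont2.tendsto 0
    simp only [Complex.ofReal_zero, zero_mul, sub_zero] at this
    exact this.mono_left nhdsWithin_le_nhds
  have hdown : Tendsto (fun s : ℝ => f (p - s * Complex.I)) (𝓝[>] (0:ℝ)) (𝓝 (f p)) :=
    hcont.tendsto.comp hpath2
  have hdownc : ∀ᶠ (s : ℝ) in 𝓝[>] (0:ℝ), f (p - s * Complex.I) = (starRingEnd ℂ) (f z) := by
    filter_upwards [self_mem_nhdsWithin] with s hs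
    have hcj : p - s * Complex.I = (starRingEnd ℂ) (p + s * Complex.I) := by
      have hpre : (starRingEnd ℂ) p = p := Complex.conj_eq_iff_im.mpr hp
      rw [map_add, hpre, map_mul, Complex.conj_ofReal, Complex.conj_I]
      ring
    rw [hcj, hconj _ (him s hs), const_on_UHP hderiv (him s hs) hz]
  have h2 : f p = (starRingEnd ℂ) (f z) :=
    tendsto_nhds_unique (hdown.congr' hdownc) tendsto_const_nhds
  have h3 : f z = (starRingEnd ℂ) (f z) := h1.symm.trans h2
  exact Complex.conj_eq_iff_im.mp h3.symm

lemma G_im_eq_zero {z : ℂ} (hz : 0 < z.im) : (Gfun z).im = 0 := by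
  refine im_eq_zero_of_pin (fun w hw => G_hasDerivAt hw) (fun w hw => G_conj hw)
    (p := (1/2 : ℂ)) ?_ G_continuousAt_half hz
  norm_num

/-- Euler reflection for the Bloch–Wigner function. -/
lemma bw_add_bw_one_sub {z : ℂ} (hz : 0 < z.im) :
    blochWigner z + blochWigner (1 - z) = 0 := by
  have h := G_im_eq_zero hz
  unfold Gfun at h
  unfold blochWigner
  have h1 : ((1:ℂ) - (1 - z)) = z := by ring
  rw [h1]
  simp only [Complex.add_im, Complex.mul_im, Complex.log_re, Complex.log_im] at h
  linarith

lemma log_one_sub_inv {z : ℂ} (hz : 0 < z.im) :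
    Complex.log (1 - z⁻¹) = Complex.log (1 - z) - Complex.log (-z) := by
  have hz0 : z ≠ 0 := fun h => by simp [h] at hz
  have h1zim : ((1:ℂ) - z).im < 0 := by simpa using hz
  have hnzim : (-z).im < 0 := by simpa using hz
  have h1z0 : (1:ℂ) - z ≠ 0 := fun h => by
    rw [h] at h1zim; simp at h1zim
  have hnz0 : (-z : ℂ) ≠ 0 := neg_ne_zero.mpr hz0
  have hargnz : (-z).arg ≠ π := fun h => by
    have := (Complex.arg_eq_pi_iff.mp h).2
    exact absurd this (ne_of_lt hnzim)
  have h1 : (1:ℂ) - z⁻¹ = (1 - z) * (-z)⁻¹ := by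
    field_simp
    ring
  have harg1 : ((1:ℂ) - z).arg < 0 := Complex.arg_neg_iff.mpr h1zim
  have harg1' : -π < ((1:ℂ) - z).arg := Complex.neg_pi_lt_arg _
  have harg2 : (-z).arg < 0 := Complex.arg_neg_iff.mpr hnzim
  have harg2' : -π < (-z).arg := Complex.neg_pi_lt_arg _
  have harginv : ((-z)⁻¹).arg = -((-z).arg) := by
    rw [Complex.arg_inv, if_neg hargnz]
  have hmem : ((1:ℂ) - z).arg + ((-z)⁻¹).arg ∈ Set.Ioc (-π) π := by
    rw [harginv]
    constructor <;> [linarith; linarith]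
  rw [h1, Complex.log_mul h1z0 (inv_ne_zero hnz0) hmem, Complex.log_inv _ hargnz,
    sub_eq_add_neg]
  ring

/-- Inversion auxiliary function. -/
noncomputable def Hfun (z : ℂ) : ℂ :=
  Li2 z + Li2 z⁻¹ + Complex.log (-z) ^ 2 / 2

lemma H_hasDerivAt {z : ℂ} (hz : 0 < z.im) : HasDerivAt Hfun 0 z := by
  have hzim : z.im ≠ 0 := ne_of_gt hz
  have hz0 : z ≠ 0 := fun h => by simp [h] at hz
  have hinvim : (z⁻¹).im ≠ 0 := by
    rw [Complex.inv_im]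
    simp only [ne_eq, div_eq_zero_iff, neg_eq_zero, not_or]
    exact ⟨hzim, fun h => hz0 (Complex.normSq_eq_zero.mp h)⟩
  have hinv0 : z⁻¹ ≠ 0 := inv_ne_zero hz0
  have hnslit : (-z) ∈ slitPlane := Or.inr (by simpa using hzim)
  have d1 := Li2_hasDerivAt (li2Good_of_im_ne hzim) hz0
  have d2 : HasDerivAt (fun w : ℂ => Li2 w⁻¹)
      (-(Complex.log (1 - z⁻¹) / z⁻¹) * -(z ^ 2)⁻¹) z := by
    have := (Li2_hasDerivAt (li2Good_of_im_ne hinvim) hinv0).comp z (hasDerivAt_inv hz0)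
    simpa [Function.comp_def] using this
  have d3inner : HasDerivAt (fun w : ℂ => Complex.log (-w)) ((-z)⁻¹ * (-1)) z := by
    have hneg : HasDerivAt (fun w : ℂ => -w) (-1 : ℂ) z := by
      exact (hasDerivAt_id z).neg
    have := (Complex.hasDerivAt_log hnslit).comp z hneg
    simpa [Function.comp_def] using this
  have d3 : HasDerivAt (fun w : ℂ => Complex.log (-w) ^ 2 / 2)
      (2 * Complex.log (-z) ^ 1 * ((-z)⁻¹ * (-1)) / 2) z := (d3inner.pow 2).div_const 2
  have dH := (d1.add d2).add d3
  refine dH.congr_deriv ?_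
  rw [log_one_sub_inv hz]
  have hne1z : (1:ℂ) - z ≠ 0 := fun h => by
    have : ((1:ℂ) - z).im < 0 := by simpa using hz
    rw [h] at this; simp at this
  field_simp
  ring

lemma H_conj {z : ℂ} (hz : 0 < z.im) :
    Hfun ((starRingEnd ℂ) z) = (starRingEnd ℂ) (Hfun z) := by
  have hzim : z.im ≠ 0 := ne_of_gt hz
  have hz0 : z ≠ 0 := fun h => by simp [h] at hz
  have hinvim : (z⁻¹).im ≠ 0 := by
    rw [Complex.inv_im]
    simp only [ne_eq, div_eq_zero_iff, neg_eq_zero, not_or]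
    exact ⟨hzim, fun h => hz0 (Complex.normSq_eq_zero.mp h)⟩
  unfold Hfun
  have hc1 : ((starRingEnd ℂ) z)⁻¹ = (starRingEnd ℂ) z⁻¹ := (map_inv₀ (starRingEnd ℂ) z).symm
  have hc2 : -((starRingEnd ℂ) z) = (starRingEnd ℂ) (-z) := (map_neg (starRingEnd ℂ) z).symm
  have hargnz : (-z).arg ≠ π := fun h => by
    have h2 := (Complex.arg_eq_pi_iff.mp h).2
    simp only [Complex.neg_im, neg_eq_zero] at h2
    exact hzim h2
  rw [hc1, hc2, Li2_conj (li2Good_of_im_ne hzim), Li2_conj (li2Good_of_im_ne hinvim),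
    Complex.log_conj _ hargnz, map_add, map_add, map_div₀, map_pow, map_ofNat]

lemma H_continuousAt_negone : ContinuousAt Hfun (-1 : ℂ) := by
  have hgood : Li2Good (-1 : ℂ) := by
    have h := li2Good_of_real_lt_one (x := -1) (by norm_num)
    rwa [show ((-1:ℝ) : ℂ) = (-1:ℂ) by push_cast; ring] at h
  have hne : (-1 : ℂ) ≠ 0 := by norm_num
  have c1 : ContinuousAt Li2 (-1 : ℂ) := Li2_continuousAt hgood hne
  have hcinv : ContinuousAt (fun z : ℂ => z⁻¹) (-1 : ℂ) := by
    exact (continuousAt_inv₀ hne)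
  have c1' : ContinuousAt Li2 ((-1 : ℂ)⁻¹) := by
    rw [show ((-1:ℂ)⁻¹) = (-1:ℂ) by norm_num]; exact c1
  have c2 : ContinuousAt (fun z : ℂ => Li2 z⁻¹) (-1 : ℂ) := by
    have := c1'.comp hcinv
    simpa [Function.comp_def] using this
  have hnslit : (-(-1 : ℂ)) ∈ slitPlane := by
    rw [show (-(-1:ℂ)) = 1 by ring]
    exact Or.inl (by norm_num)
  have c3 : ContinuousAt (fun z : ℂ => Complex.log (-z) ^ 2 / 2) (-1 : ℂ) := by
    have hneg : ContinuousAt (fun z : ℂ => -z) (-1 : ℂ) := continuous_neg.continuousAt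
    have := ((continuousAt_clog hnslit).comp hneg).pow 2
    exact this.div_const 2
  exact (c1.add c2).add c3

lemma H_im_eq_zero {z : ℂ} (hz : 0 < z.im) : (Hfun z).im = 0 := by
  refine im_eq_zero_of_pin (fun w hw => H_hasDerivAt hw) (fun w hw => H_conj hw)
    (p := (-1 : ℂ)) ?_ H_continuousAt_negone hz
  norm_num

/-- Inversion identity for the Bloch–Wigner function. -/
lemma bw_add_bw_inv {z : ℂ} (hz : 0 < z.im) :
    blochWigner z + blochWigner z⁻¹ = 0 := by
  have h := H_im_eq_zero hz
  unfold Hfun at h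
  unfold blochWigner
  have harg : ((1:ℂ) - z⁻¹).arg = ((1:ℂ) - z).arg - (-z).arg := by
    have := congrArg Complex.im (log_one_sub_inv hz)
    simpa [Complex.log_im] using this
  have habs : Real.log ‖z⁻¹‖ = -Real.log ‖z‖ := by
    rw [norm_inv, Real.log_inv]
  have habsneg : Real.log ‖-z‖ = Real.log ‖z‖ := by
    rw [norm_neg]
  have hsq : (Complex.log (-z) ^ 2 / 2).im
      = Real.log ‖z‖ * (-z).arg := by
    rw [Complex.div_im]
    simp [pow_two, Complex.mul_im, Complex.mul_re, Complex.log_re, Complex.log_im, habsneg]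
    ring
  simp only [Complex.add_im, hsq] at h
  rw [harg, habs]
  linarith

lemma bw_conj {z : ℂ} (him : z.im ≠ 0) (him2 : ((1:ℂ) - z).im ≠ 0) :
    blochWigner ((starRingEnd ℂ) z) = -blochWigner z := by
  unfold blochWigner
  have h1 : (1 : ℂ) - (starRingEnd ℂ) z = (starRingEnd ℂ) (1 - z) := by rw [map_sub, map_one]
  have hargne : ((1:ℂ) - z).arg ≠ π := fun h => him2 (Complex.arg_eq_pi_iff.mp h).2
  rw [Li2_conj (li2Good_of_im_ne him), h1, Complex.arg_conj, if_neg hargne, Complex.norm_conj]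
  simp [Complex.conj_im]
  ring

/-- With `a = (1 + √−15)/2` (square root with positive imaginary part), the elements
`ξ = 3[(a+3)/4] + 2[a−1] + 2[a+1] + 4[a/2]` and Gangl's
`δ = 3[a] + 4[(a+1)/2] + 2[a+1] + 2[a−1]` have the same value under the Bloch–Wigner
dilogarithm `D` (extended by linearity). -/
theorem blochWigner_xi_eq_gangl_delta :
    let a : ℂ := (1 + Complex.I * Real.sqrt 15) / 2
    3 * blochWigner ((a + 3) / 4) + 2 * blochWigner (a - 1) + 2 * blochWigner (a + 1) +
        4 * blochWigner (a / 2) =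
      3 * blochWigner a + 4 * blochWigner ((a + 1) / 2) + 2 * blochWigner (a + 1) +
        2 * blochWigner (a - 1) := by
  intro a
  have ha : a = (1 + Complex.I * Real.sqrt 15) / 2 := rfl
  set s : ℝ := Real.sqrt 15 with hs
  have hs0 : 0 < s := Real.sqrt_pos.mpr (by norm_num)
  have hs2 : (s:ℂ)^2 = 15 := by
    rw [← Complex.ofReal_pow]
    norm_cast
    exact Real.sq_sqrt (by norm_num)
  have h_a : a = ((1/2 : ℝ) : ℂ) + ((s/2 : ℝ) : ℂ) * Complex.I := by rw [ha]; push_cast; ring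
  have im_a : a.im = s/2 := by rw [h_a]; simp
  have h_half : a/2 = ((1/4 : ℝ) : ℂ) + ((s/4 : ℝ) : ℂ) * Complex.I := by
    rw [ha]; push_cast; ring
  have im_half : (a/2).im = s/4 := by rw [h_half]; simp
  have h_p34 : (a+3)/4 = ((7/8 : ℝ) : ℂ) + ((s/8 : ℝ) : ℂ) * Complex.I := by
    rw [ha]; push_cast; ring
  have im_p34 : ((a+3)/4).im = s/8 := by rw [h_p34]; simp
  have h_1mhalf : (1:ℂ) - a/2 = ((3/4 : ℝ) : ℂ) + ((-(s/4) : ℝ) : ℂ) * Complex.I := by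
    rw [ha]; push_cast; ring
  have im_1mhalf : ((1:ℂ) - a/2).im = -(s/4) := by rw [h_1mhalf]; simp
  have key : (s:ℂ)^2 * Complex.I^2 = -15 := by rw [hs2, Complex.I_sq]; ring
  have hinv : (1:ℂ) - (a+3)/4 = a⁻¹ := by
    refine (inv_eq_of_mul_eq_one_right ?_).symm
    rw [ha]
    linear_combination (-(1:ℂ)/16) * key
  have hconjpt : (starRingEnd ℂ) (1 - a/2) = (a+1)/2 := by
    rw [h_1mhalf, ha, map_add, map_mul, Complex.conj_ofReal, Complex.conj_ofReal,
      Complex.conj_I]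
    push_cast
    ring
  have e1 : blochWigner (a/2) + blochWigner (1 - a/2) = 0 :=
    bw_add_bw_one_sub (by rw [im_half]; positivity)
  have e2 : blochWigner ((a+1)/2) = -blochWigner (1 - a/2) := by
    rw [← hconjpt]
    refine bw_conj (by rw [im_1mhalf]; intro h; simp at h; linarith) ?_
    have hh : (1:ℂ) - (1 - a/2) = a/2 := by ring
    rw [hh, im_half]
    positivity
  have e3 : blochWigner ((a+3)/4) + blochWigner a⁻¹ = 0 := by
    have h := bw_add_bw_one_sub (z := (a+3)/4) (by rw [im_p34]; positivity)
    rwa [hinv] at h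
  have e4 : blochWigner a + blochWigner a⁻¹ = 0 :=
    bw_add_bw_inv (by rw [im_a]; positivity)
  linarith
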